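/- Let v be a valuation on a superring R and let 𝔭, 𝔮 be prime ideals of A_v with supp(v) ⊆ 𝔭 ⊆ 𝔭_v and supp(v) ⊆ 𝔮 ⊆ 𝔭_v. Then 𝔭 ⊆ 𝔮 or 𝔮 ⊆ 𝔭. -/

import Mathlib

universe u

/-- A superring: a `ZMod 2`-graded ring `R = R₀ ⊕ R₁` which is supercommutative
(`R₀` is central and every odd element squares to zero). -/
structure IsSuperring {R : Type*} [Ring R] (𝒜 : ZMod 2 → AddSubgroup R) : Prop where
  one_mem : (1 : R) ∈ 𝒜 0
  mul_mem : ∀ {i j : ZMod 2} {x y : R}, x ∈ 𝒜 i → y ∈ 𝒜 j → x * y ∈ 𝒜 (i + j)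
  decompose : ∀ x : R, ∃ x0 ∈ 𝒜 0, ∃ x1 ∈ 𝒜 1, x = x0 + x1
  unique_decomp : ∀ x0 ∈ 𝒜 0, ∀ x1 ∈ 𝒜 1, x0 + x1 = 0 → x0 = 0 ∧ x1 = 0
  even_central : ∀ x ∈ 𝒜 0, ∀ y : R, x * y = y * x
  odd_sq : ∀ x ∈ 𝒜 1, x * x = 0

/-- A (Manis) valuation on a ring `R`: a surjective map `v : R → Γ ∪ {∞}`
(`∞ = ⊤` is absorbing and greater than every element of the totally ordered
abelian group `Γ`) with `v 0 = ∞`, `v 1 = 0`, `v (x*y) = v x + v y` and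
`v (x+y) ≥ min (v x) (v y)`. -/
structure IsValuation {R : Type*} [Ring R] {Γ : Type*} [AddCommGroup Γ] [LinearOrder Γ] [IsOrderedAddMonoid Γ]
    (v : R → WithTop Γ) : Prop where
  surjective : Function.Surjective v
  map_zero : v 0 = ⊤
  map_one : v 1 = 0
  map_mul : ∀ x y : R, v (x * y) = v x + v y
  min_le_add : ∀ x y : R, min (v x) (v y) ≤ v (x + y)

/-- `A_v = {x : v x ≥ 0}`. -/
def valRing {R : Type*} [Ring R] {Γ : Type*} [AddCommGroup Γ] [LinearOrder Γ] [IsOrderedAddMonoid Γ]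
    (v : R → WithTop Γ) : Set R := {x : R | 0 ≤ v x}

/-- `𝔭_v = {x : v x > 0}`. -/
def valIdeal {R : Type*} [Ring R] {Γ : Type*} [AddCommGroup Γ] [LinearOrder Γ] [IsOrderedAddMonoid Γ]
    (v : R → WithTop Γ) : Set R := {x : R | 0 < v x}

/-- `supp v = v⁻¹(∞)`. -/
def valSupp {R : Type*} [Ring R] {Γ : Type*} [AddCommGroup Γ] [LinearOrder Γ] [IsOrderedAddMonoid Γ]
    (v : R → WithTop Γ) : Set R := {x : R | v x = ⊤}

/-- A prime ideal `p` of a subring `A` of `R`: an ideal of `A` such that `A/p` is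
an integral domain. -/
structure IsPrimeIdealOf {R : Type*} [Ring R] (A p : Set R) : Prop where
  subset : p ⊆ A
  zero_mem : (0 : R) ∈ p
  add_mem : ∀ {x y : R}, x ∈ p → y ∈ p → x + y ∈ p
  neg_mem : ∀ {x : R}, x ∈ p → -x ∈ p
  mul_mem_left : ∀ {a x : R}, a ∈ A → x ∈ p → a * x ∈ p
  mul_mem_right : ∀ {x a : R}, x ∈ p → a ∈ A → x * a ∈ p
  one_not_mem : (1 : R) ∉ p
  comm_mem : ∀ {x y : R}, x ∈ A → y ∈ A → x * y - y * x ∈ p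
  mem_or_mem : ∀ {x y : R}, x ∈ A → y ∈ A → x * y ∈ p → x ∈ p ∨ y ∈ p

/-- In a superring, every commutator squares to zero. -/
theorem superring_comm_sq {R : Type u} [Ring R] (𝒜 : ZMod 2 → AddSubgroup R)
    (hR : IsSuperring 𝒜) (a b : R) : (a * b - b * a) * (a * b - b * a) = 0 := by
  obtain ⟨a0, ha0, a1, ha1, rfl⟩ := hR.decompose a
  obtain ⟨b0, hb0, b1, hb1, rfl⟩ := hR.decompose b
  have e1 : a0 * b0 = b0 * a0 := hR.even_central a0 ha0 b0
  have e2 : a0 * b1 = b1 * a0 := hR.even_central a0 ha0 b1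
  have e3 : b0 * a1 = a1 * b0 := hR.even_central b0 hb0 a1
  have e5 : a1 * a1 = 0 := hR.odd_sq a1 ha1
  have e6 : b1 * b1 = 0 := hR.odd_sq b1 hb1
  have hsum : (a1 + b1) * (a1 + b1) = 0 := hR.odd_sq _ ((𝒜 1).add_mem ha1 hb1)
  have e4 : b1 * a1 = -(a1 * b1) := by
    have h : a1 * a1 + a1 * b1 + b1 * a1 + b1 * b1 = 0 := by
      rw [← hsum]; noncomm_ring
    rw [e5, e6] at h
    simp only [zero_add, add_zero] at h
    exact eq_neg_of_add_eq_zero_right h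
  have hc : (a0 + a1) * (b0 + b1) - (b0 + b1) * (a0 + a1)
      = (a0 * b0 - b0 * a0) + (a0 * b1 - b1 * a0) + (a1 * b0 - b0 * a1)
        + (a1 * b1 - b1 * a1) := by noncomm_ring
  rw [e1, e3] at hc
  have hc' : (a0 + a1) * (b0 + b1) - (b0 + b1) * (a0 + a1) = a1 * b1 + a1 * b1 := by
    rw [hc, e2, e4]; noncomm_ring
  rw [hc']
  have h0 : (a1 * b1) * (a1 * b1) = 0 := by
    have : (a1 * b1) * (a1 * b1) = a1 * (b1 * a1) * b1 := by noncomm_ring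
    rw [this, e4]
    have : a1 * -(a1 * b1) * b1 = -((a1 * a1) * (b1 * b1)) := by noncomm_ring
    rw [this, e5, zero_mul, neg_zero]
  simp [add_mul, mul_add, h0]

/-- In a superring with a valuation, commutators lie in the support. -/
theorem comm_mem_supp {R : Type u} [Ring R] (𝒜 : ZMod 2 → AddSubgroup R)
    (hR : IsSuperring 𝒜) {Γ : Type*} [AddCommGroup Γ] [LinearOrder Γ] [IsOrderedAddMonoid Γ]
    (v : R → WithTop Γ) (hv : IsValuation v) (a b : R) : v (a * b - b * a) = ⊤ := by
  have h := superring_comm_sq 𝒜 hR a b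
  have h2 : v (a * b - b * a) + v (a * b - b * a) = ⊤ := by
    rw [← hv.map_mul, h, hv.map_zero]
  rcases WithTop.add_eq_top.mp h2 with h3 | h3 <;> exact h3

/-- The key absorption lemma: a prime between the support and the center absorbs
elements of larger valuation. -/
theorem absorb {R : Type u} [Ring R] (𝒜 : ZMod 2 → AddSubgroup R)
    (hR : IsSuperring 𝒜) {Γ : Type*} [AddCommGroup Γ] [LinearOrder Γ] [IsOrderedAddMonoid Γ]
    (v : R → WithTop Γ) (hv : IsValuation v)
    (p : Set R) (hp : IsPrimeIdealOf (valRing v) p)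
    (hp1 : valSupp v ⊆ p) (hp2 : p ⊆ valIdeal v)
    {x z : R} (hx : x ∈ p) (hz : z ∈ valRing v) (hle : v x ≤ v z) : z ∈ p := by
  rcases eq_or_ne (v x) ⊤ with htop | htop
  · exact hp1 (top_le_iff.mp (htop ▸ hle))
  · obtain ⟨γ, hγ⟩ := WithTop.ne_top_iff_exists.mp htop
    obtain ⟨s, hs⟩ := hv.surjective (↑(-γ) : WithTop Γ)
    have hsx : v (s * x) = 0 := by
      rw [hv.map_mul, hs, ← hγ, ← WithTop.coe_add, neg_add_cancel, WithTop.coe_zero]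
    have hsz : 0 ≤ v (s * z) := by
      rw [hv.map_mul, hs]
      calc (0 : WithTop Γ) = ↑(-γ) + ↑γ := by
            rw [← WithTop.coe_add, neg_add_cancel, WithTop.coe_zero]
        _ ≤ ↑(-γ) + v z := by exact add_le_add_right (hγ ▸ hle) _
    have h1 : (s * z) * x ∈ p := hp.mul_mem_left hsz hx
    have h2 : s * (z * x - x * z) ∈ p := by
      apply hp1
      show v _ = ⊤
      rw [hv.map_mul, comm_mem_supp 𝒜 hR v hv z x, add_top]
    have h3 : (s * x) * z ∈ p := by
      have heq : (s * x) * z = (s * z) * x + -(s * (z * x - x * z)) := by noncomm_ring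
      rw [heq]
      exact hp.add_mem h1 (hp.neg_mem h2)
    rcases hp.mem_or_mem (le_of_eq hsx.symm) hz h3 with h4 | h4
    · exact absurd (hp2 h4) (by simp [valIdeal, hsx])
    · exact h4

/-- Prime ideals of `A_v` lying between `supp v` and `𝔭_v` are comparable. -/
theorem primes_between_supp_and_center_comparable {R : Type u} [Ring R] [Nontrivial R]
    (𝒜 : ZMod 2 → AddSubgroup R) (hR : IsSuperring 𝒜)
    {Γ : Type*} [AddCommGroup Γ] [LinearOrder Γ] [IsOrderedAddMonoid Γ]
    (v : R → WithTop Γ) (hv : IsValuation v)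
    (p q : Set R) (hp : IsPrimeIdealOf (valRing v) p) (hq : IsPrimeIdealOf (valRing v) q)
    (hp1 : valSupp v ⊆ p) (hp2 : p ⊆ valIdeal v)
    (hq1 : valSupp v ⊆ q) (hq2 : q ⊆ valIdeal v) :
    p ⊆ q ∨ q ⊆ p := by
  by_cases hpq : p ⊆ q
  · exact Or.inl hpq
  · right
    obtain ⟨x, hxp, hxq⟩ := Set.not_subset.mp hpq
    intro y hyq
    rcases le_total (v x) (v y) with hle | hle
    · exact absorb 𝒜 hR v hv p hp hp1 hp2 hxp (hq.subset hyq) hle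
    · exact absurd (absorb 𝒜 hR v hv q hq hq1 hq2 hyq (hp.subset hxp) hle) hxq
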